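/- Let ι be a finite index set and for each i ∈ ι let A i be an n×n Hermitian positive semidefinite complex matrix. Then det(1 + ∑_{i ∈ ι} A i) ≤ ∏_{i ∈ ι} det(1 + A i), where 1 denotes the n×n identity matrix. -/

import Mathlib

open Matrix
open scoped ComplexOrder

open scoped MatrixOrder in
private lemma detlem_one_sub_inv_psd {n : ℕ} {A : Matrix (Fin n) (Fin n) ℂ}
    (hA : A.PosSemidef) : (1 - (1 + A)⁻¹).PosSemidef := by
  have hM : (1 + A).PosDef := Matrix.PosDef.one.add_posSemidef hA
  have hu : IsUnit (1 + A).det := hM.det_pos.ne'.isUnit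
  set Q := CFC.sqrt A with hQdef
  have hQ2 : Q * Q = A := CFC.sqrt_mul_sqrt_self A hA.nonneg
  have hQH : Qᴴ = Q := (CFC.sqrt_nonneg A).posSemidef.isHermitian
  have hcomm : Q * (1 + A) = (1 + A) * Q := by
    rw [mul_add, add_mul, mul_one, one_mul, ← hQ2, mul_assoc]
  have hcomm' : (1 + A)⁻¹ * Q = Q * (1 + A)⁻¹ := by
    have := congrArg (fun X => (1 + A)⁻¹ * X * (1 + A)⁻¹) hcomm
    simp only [← Matrix.mul_assoc] at this
    rw [Matrix.mul_assoc ((1+A)⁻¹ * Q), Matrix.mul_nonsing_inv _ hu, Matrix.mul_one,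
      Matrix.nonsing_inv_mul _ hu, Matrix.one_mul] at this
    exact this
  have key : 1 - (1 + A)⁻¹ = Qᴴ * (1 + A)⁻¹ * Q := by
    rw [hQH]
    calc 1 - (1 + A)⁻¹ = (1 + A)⁻¹ * ((1 + A) - 1) := by
          rw [mul_sub, mul_one, Matrix.nonsing_inv_mul _ hu]
      _ = (1 + A)⁻¹ * A := by rw [add_sub_cancel_left]
      _ = (1 + A)⁻¹ * Q * Q := by rw [Matrix.mul_assoc, hQ2]
      _ = Q * (1 + A)⁻¹ * Q := by rw [hcomm']
  rw [key]
  exact (hM.posSemidef.inv).conjTranspose_mul_mul_same Q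

private lemma detlem_psd_smul {n : ℕ} {N : Matrix (Fin n) (Fin n) ℂ} (hN : N.PosSemidef)
    {c : ℝ} (hc : 0 ≤ c) : ((c : ℂ) • N).PosSemidef := by
  rw [posSemidef_iff_dotProduct_mulVec]
  constructor
  · unfold Matrix.IsHermitian
    rw [conjTranspose_smul, hN.1.eq]
    congr 1
    simp [RCLike.star_def]
  · intro x
    rw [smul_mulVec, dotProduct_smul]
    exact mul_nonneg (by exact_mod_cast hc) (hN.dotProduct_mulVec_nonneg x)

private lemma detlem_rank_one {n : ℕ} {A : Matrix (Fin n) (Fin n) ℂ} (hA : A.PosSemidef)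
    (c : ℝ) (hc : 0 ≤ c) (v : Fin n → ℂ) :
    (1 + A + (c : ℂ) • (replicateCol (Fin 1) v * replicateRow (Fin 1) (star v))).det
      ≤ (1 + A).det * (1 + (c : ℂ) * (star v ⬝ᵥ v)) := by
  have hM : (1 + A).PosDef := Matrix.PosDef.one.add_posSemidef hA
  have hu : IsUnit (1 + A).det := hM.det_pos.ne'.isUnit
  have h1 : (c : ℂ) • (replicateCol (Fin 1) v * replicateRow (Fin 1) (star v))
      = replicateCol (Fin 1) ((c : ℂ) • v) * replicateRow (Fin 1) (star v) := by
    rw [replicateCol_smul, Matrix.smul_mul]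
  rw [h1, det_add_mul _ _ hu, det_fin_one]
  have h2 : ((1 + replicateRow (Fin 1) (star v) * (1 + A)⁻¹ * replicateCol (Fin 1) ((c:ℂ) • v) :
        Matrix (Fin 1) (Fin 1) ℂ)) 0 0
      = 1 + (c : ℂ) * (star v ⬝ᵥ ((1 + A)⁻¹ *ᵥ v)) := by
    simp [Matrix.mul_apply, Matrix.add_apply, Matrix.one_apply, dotProduct, mulVec,
      Finset.mul_sum, Finset.sum_mul, mul_comm, mul_assoc, mul_left_comm]
    rw [Finset.sum_comm]
  rw [h2]
  have hdet : (0:ℂ) ≤ (1 + A).det := le_of_lt hM.det_pos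
  have hcC : (0:ℂ) ≤ (c:ℂ) := by exact_mod_cast hc
  have hkey : (1 - (1 + A)⁻¹).PosSemidef := detlem_one_sub_inv_psd hA
  have hle : star v ⬝ᵥ ((1 + A)⁻¹ *ᵥ v) ≤ star v ⬝ᵥ v := by
    have h0 := hkey.dotProduct_mulVec_nonneg v
    rw [sub_mulVec, dotProduct_sub, one_mulVec] at h0
    exact sub_nonneg.mp h0
  exact mul_le_mul_of_nonneg_left
    (add_le_add_right (mul_le_mul_of_nonneg_left hle hcC) 1) hdet

private lemma detlem_two {n : ℕ} {A B : Matrix (Fin n) (Fin n) ℂ}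
    (hA : A.PosSemidef) (hB : B.PosSemidef) :
    (1 + A + B).det ≤ (1 + A).det * (1 + B).det := by
  have hH := hB.1
  set U : Matrix (Fin n) (Fin n) ℂ := ↑hH.eigenvectorUnitary with hU
  set lam := hH.eigenvalues with hlam
  set u : Fin n → Fin n → ℂ := fun j i => U i j with hu
  set R : Fin n → Matrix (Fin n) (Fin n) ℂ :=
    fun j => (lam j : ℂ) • (replicateCol (Fin 1) (u j) * replicateRow (Fin 1) (star (u j))) with hR
  have hdecomp : B = ∑ j, R j := by
    conv_lhs => rw [hH.spectral_theorem]
    ext i k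
    simp only [Unitary.conjStarAlgAut_apply, Matrix.sum_apply, Matrix.smul_apply, Matrix.mul_apply, Matrix.replicateCol_apply,
      Matrix.replicateRow_apply, Fin.sum_univ_one, Pi.star_apply, RCLike.star_def, smul_eq_mul, u,
      hH.eigenvectorUnitary_apply, U, R]
    simp only [Matrix.diagonal_apply, Function.comp_apply, ite_mul, zero_mul, mul_ite, mul_zero,
      Finset.sum_ite_eq, Finset.sum_ite_eq', Finset.mem_univ, if_true, Matrix.star_apply,
      RCLike.star_def, hH.eigenvectorUnitary_apply]
    refine Finset.sum_congr rfl fun x _ => by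
      rw [mul_comm ((lam x : ℂ))]; exact mul_right_comm _ _ _
  have hnorm : ∀ j, star (u j) ⬝ᵥ u j = 1 := by
    intro j
    have h : star U * U = 1 := Unitary.coe_star_mul_self hH.eigenvectorUnitary
    have := congrFun (congrFun h j) j
    simpa [Matrix.mul_apply, Matrix.one_apply, dotProduct, star_apply, u,
      Matrix.conjTranspose_apply] using this
  have hdet : (1 + B).det = ∏ j, (1 + (lam j : ℂ)) := by
    have h1 : (1 : Matrix (Fin n) (Fin n) ℂ) + B
        = U * (1 + diagonal (fun j => (lam j : ℂ))) * star U := by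
      rw [Matrix.mul_add, Matrix.add_mul, Matrix.mul_one]
      rw [show (U * star U : Matrix (Fin n) (Fin n) ℂ) = 1 from
        Unitary.coe_mul_star_self hH.eigenvectorUnitary]
      congr 1
      conv_lhs => rw [hH.spectral_theorem]
      rfl
    rw [h1, det_mul, det_mul, mul_comm, ← mul_assoc, ← det_mul, show (star U * U :
        Matrix (Fin n) (Fin n) ℂ) = 1 from Unitary.coe_star_mul_self hH.eigenvectorUnitary,
      det_one, one_mul]
    rw [show (1 : Matrix (Fin n) (Fin n) ℂ) + diagonal (fun j => (lam j : ℂ))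
      = diagonal (fun j => 1 + (lam j : ℂ)) by rw [← diagonal_one, diagonal_add], det_diagonal]
  have hRpsd : ∀ j, (R j).PosSemidef := by
    intro j
    refine detlem_psd_smul ?_ (hB.eigenvalues_nonneg j)
    rw [← conjTranspose_replicateCol]
    exact posSemidef_self_mul_conjTranspose _
  have key : ∀ s : Finset (Fin n),
      (1 + A + ∑ j ∈ s, R j).det ≤ (1 + A).det * ∏ j ∈ s, (1 + (lam j : ℂ)) := by
    intro s
    induction s using Finset.induction_on with
    | empty =>
      simp only [Finset.sum_empty, add_zero, Finset.prod_empty, mul_one]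
      exact le_refl _
    | @insert a s hns ih =>
      rw [Finset.sum_insert hns, Finset.prod_insert hns]
      have hsum : (∑ j ∈ s, R j).PosSemidef :=
        Finset.sum_induction _ _ (fun a b ha hb => ha.add hb) .zero (fun j _ => hRpsd j)
      have hA' : (A + ∑ j ∈ s, R j).PosSemidef := hA.add hsum
      have hr := detlem_rank_one hA' (lam a) (hB.eigenvalues_nonneg a) (u a)
      rw [hnorm a, mul_one] at hr
      have harr : 1 + A + (R a + ∑ j ∈ s, R j)
          = 1 + (A + ∑ j ∈ s, R j) + R a := by abel
      rw [harr]
      have hone : (0:ℂ) ≤ 1 + (lam a : ℂ) := by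
        have : (0:ℂ) ≤ (lam a : ℂ) := by exact_mod_cast hB.eigenvalues_nonneg a
        exact add_nonneg zero_le_one this
      calc (1 + (A + ∑ j ∈ s, R j) + R a).det
          ≤ (1 + (A + ∑ j ∈ s, R j)).det * (1 + (lam a : ℂ)) := by
            rw [hR] at hr ⊢; exact hr
        _ = (1 + A + ∑ j ∈ s, R j).det * (1 + (lam a : ℂ)) := by rw [add_assoc]
        _ ≤ ((1 + A).det * ∏ j ∈ s, (1 + (lam j : ℂ))) * (1 + (lam a : ℂ)) :=
            mul_le_mul_of_nonneg_right ih hone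
        _ = (1 + A).det * ((1 + (lam a : ℂ)) * ∏ j ∈ s, (1 + (lam j : ℂ))) := by ring
  calc (1 + A + B).det = (1 + A + ∑ j, R j).det := by rw [← hdecomp]
    _ ≤ (1 + A).det * ∏ j, (1 + (lam j : ℂ)) := key Finset.univ
    _ = (1 + A).det * (1 + B).det := by rw [hdet]

open ComplexOrder in
/-- Finite-family generalization: for a finite family of Hermitian positive
semidefinite matrices `A i`, `det (1 + ∑ i, A i) ≤ ∏ i, det (1 + A i)`. -/
theorem det_one_add_sum_le
    {n : ℕ} {ι : Type*} [Fintype ι]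
    (A : ι → Matrix (Fin n) (Fin n) ℂ)
    (hA : ∀ i, (A i).PosSemidef) :
    (1 + ∑ i, A i).det ≤ ∏ i, (1 + A i).det := by
  classical
  have key : ∀ s : Finset ι, (1 + ∑ i ∈ s, A i).det ≤ ∏ i ∈ s, (1 + A i).det := by
    intro s
    induction s using Finset.induction_on with
    | empty => simp
    | @insert a s hns ih =>
      rw [Finset.sum_insert hns, Finset.prod_insert hns]
      have hs : (∑ i ∈ s, A i).PosSemidef :=
        Finset.sum_induction _ _ (fun a b ha hb => ha.add hb) .zero (fun i _ => hA i)
      have hpos : (0:ℂ) ≤ (1 + A a).det :=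
        le_of_lt (Matrix.PosDef.one.add_posSemidef (hA a)).det_pos
      calc (1 + (A a + ∑ i ∈ s, A i)).det = (1 + ∑ i ∈ s, A i + A a).det := by
            rw [show (1 : Matrix (Fin n) (Fin n) ℂ) + (A a + ∑ i ∈ s, A i)
              = 1 + ∑ i ∈ s, A i + A a by abel]
        _ ≤ (1 + ∑ i ∈ s, A i).det * (1 + A a).det := detlem_two hs (hA a)
        _ ≤ (∏ i ∈ s, (1 + A i).det) * (1 + A a).det :=
            mul_le_mul_of_nonneg_right ih hpos
        _ = (1 + A a).det * ∏ i ∈ s, (1 + A i).det := mul_comm _ _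
  simpa using key Finset.univ
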